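/- arXiv:2307.06928 — 2 statements merged into one kernel-verified Lean document; each statement's English description precedes it below -/
import Mathlib

section
/- With necessity arrows at higher type, the type Nat ⇝ (Nat→Nat) is not downward closed: the value λx.λy.((λz.pred(z)) x) belongs to ⟦Nat ⇝ (Nat→Nat)⟧, the term λx.λy.(div x) does not belong to T̄⟦Nat ⇝ (Nat→Nat)⟧, yet div ≲ λz.pred(z) (so replacing the subterm λz.pred(z) by the ≲-smaller closed term div takes the term out of the type). -/
namespace PCF

/-- Terms of the simple CBV, PCF-like language.  Variables are natural numbers. -/
inductive Tm : Type
  | var : ℕ → Tm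
  | zero : Tm
  | succ : Tm → Tm
  | pred : Tm → Tm
  | ifz : Tm → Tm → Tm → Tm
  | abs : ℕ → Tm → Tm
  | app : Tm → Tm → Tm
  | fix : ℕ → Tm → Tm
  | pair : Tm → Tm → Tm
  | lett : ℕ → ℕ → Tm → Tm → Tm
  deriving DecidableEq

/-- The numeral `succ^n(zero)`. -/
def numeral : ℕ → Tm
  | 0 => .zero
  | n + 1 => .succ (numeral n)

/-- Values. -/
inductive IsValue : Tm → Prop
  | var (x : ℕ) : IsValue (.var x)
  | num (n : ℕ) : IsValue (numeral n)
  | pair {V W : Tm} : IsValue V → IsValue W → IsValue (.pair V W)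
  | abs (x : ℕ) (M : Tm) : IsValue (.abs x M)

/-- Capture-permitting substitution `M[N/x]` (adequate since we only ever
substitute closed terms). -/
def subst (x : ℕ) (N : Tm) : Tm → Tm
  | .var y => if y = x then N else .var y
  | .zero => .zero
  | .succ M => .succ (subst x N M)
  | .pred M => .pred (subst x N M)
  | .ifz M P Q => .ifz (subst x N M) (subst x N P) (subst x N Q)
  | .abs y M => if y = x then .abs y M else .abs y (subst x N M)
  | .app M P => .app (subst x N M) (subst x N P)
  | .fix y M => if y = x then .fix y M else .fix y (subst x N M)
  | .pair M P => .pair (subst x N M) (subst x N P)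
  | .lett y z M P =>
      .lett y z (subst x N M) (if y = x ∨ z = x then P else subst x N P)

/-- Free variables. -/
def fv : Tm → Finset ℕ
  | .var y => {y}
  | .zero => ∅
  | .succ M => fv M
  | .pred M => fv M
  | .ifz M P Q => fv M ∪ fv P ∪ fv Q
  | .abs y M => fv M \ {y}
  | .app M P => fv M ∪ fv P
  | .fix y M => fv M \ {y}
  | .pair M P => fv M ∪ fv P
  | .lett y z M P => fv M ∪ (fv P \ {y, z})

def ClosedTm (M : Tm) : Prop := fv M = ∅

/-- One-step call-by-value reduction (closure of the redex rules under
evaluation contexts). -/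
inductive Step : Tm → Tm → Prop
  | ifz_zero {N P : Tm} : Step (.ifz (numeral 0) N P) N
  | ifz_succ {n : ℕ} {N P : Tm} : Step (.ifz (numeral (n + 1)) N P) P
  | lett_beta {x y : ℕ} {V W M : Tm} : IsValue V → IsValue W →
      Step (.lett x y (.pair V W) M) (subst y W (subst x V M))
  | fix_step {x : ℕ} {M : Tm} : Step (.fix x M) (subst x (.fix x M) M)
  | pred_zero : Step (.pred (numeral 0)) (numeral 0)
  | pred_succ {n : ℕ} : Step (.pred (numeral (n + 1))) (numeral n)
  | beta {x : ℕ} {M V : Tm} : IsValue V → Step (.app (.abs x M) V) (subst x V M)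
  | succ_ctx {M M' : Tm} : Step M M' → Step (.succ M) (.succ M')
  | pred_ctx {M M' : Tm} : Step M M' → Step (.pred M) (.pred M')
  | pair_left {M M' N : Tm} : Step M M' → Step (.pair M N) (.pair M' N)
  | pair_right {V N N' : Tm} : IsValue V → Step N N' → Step (.pair V N) (.pair V N')
  | lett_ctx {x y : ℕ} {M M' N : Tm} : Step M M' → Step (.lett x y M N) (.lett x y M' N)
  | ifz_ctx {M M' N P : Tm} : Step M M' → Step (.ifz M N P) (.ifz M' N P)
  | app_right {x : ℕ} {M N N' : Tm} : Step N N' →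
      Step (.app (.abs x M) N) (.app (.abs x M) N')
  | app_left {M M' N : Tm} : Step M M' → Step (.app M N) (.app M' N)

/-- Many-step reduction. -/
def Steps : Tm → Tm → Prop := Relation.ReflTransGen Step

def NormalForm (M : Tm) : Prop := ¬ ∃ N, Step M N

def Evaluates (M : Tm) : Prop := ∃ V, Steps M V ∧ IsValue V

/-- `M` diverges: it has no normal form. -/
def Diverges (M : Tm) : Prop := ¬ ∃ N, Steps M N ∧ NormalForm N

def Stuck (M : Tm) : Prop := NormalForm M ∧ ¬ IsValue M

def GoesWrong (M : Tm) : Prop := ∃ P, Steps M P ∧ Stuck P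

/-- `div` = `fix x. x`. -/
def divTm : Tm := .fix 0 (.var 0)

/-- `P ≲ N`: if `P` reduces to a normal form then `N` reduces to the same
normal form. -/
def RefBelow (P N : Tm) : Prop := ∀ R, Steps P R → NormalForm R → Steps N R

/-- Fixpoint approximants. -/
def fixApprox (x : ℕ) (M : Tm) : ℕ → Tm
  | 0 => divTm
  | n + 1 => subst x (fixApprox x M n) M


/-- Extended types: arbitrary types allowed on the right of the necessity
arrow. -/
inductive Ty : Type
  | nat : Ty
  | prod : Ty → Ty → Ty
  | arrow : Ty → Ty → Ty
  | narrow : Ty → Ty → Ty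
  | ok : Ty
  deriving DecidableEq

/-- `T⟦·⟧` applied to a set of values: the terms that evaluate into it. -/
def TSem (Sv : Tm → Prop) (M : Tm) : Prop :=
  ClosedTm M ∧ ∃ V, Steps M V ∧ IsValue V ∧ Sv V

/-- `TBar⟦·⟧`: evaluate into the set, or diverge. -/
def TBarSem (Sv : Tm → Prop) (M : Tm) : Prop :=
  TSem Sv M ∨ (ClosedTm M ∧ Diverges M)

/-- Semantics of (extended) types, as sets of closed values. -/
def Sem : Ty → Tm → Prop
  | .nat => fun M => ∃ n, M = numeral n
  | .prod A B => fun M => ∃ V W, M = .pair V W ∧ Sem A V ∧ Sem B W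
  | .arrow A B => fun M => ∃ x P, M = .abs x P ∧ ClosedTm M ∧
      ∀ V, ClosedTm V → IsValue V → Sem A V → TBarSem (Sem B) (subst x V P)
  | .narrow A B => fun M => ∃ x P, M = .abs x P ∧ ClosedTm M ∧
      ∀ V, ClosedTm V → IsValue V → TSem (Sem B) (subst x V P) → Sem A V
  | .ok => fun M => ClosedTm M ∧ IsValue M

/-- The value `λx. λy. ((λz. pred z) x)` (with `x = 0`, `y = 1`, `z = 2`). -/
def term1 : Tm := .abs 0 (.abs 1 (.app (.abs 2 (.pred (.var 2))) (.var 0)))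

/-- The term `λx. λy. (div x)`. -/
def term2 : Tm := .abs 0 (.abs 1 (.app divTm (.var 0)))

/-! ### Auxiliary lemmas -/

lemma numeral_no_step : ∀ n N, ¬ Step (numeral n) N := by
  intro n
  induction n with
  | zero => intro N h; simp only [numeral] at h; cases h
  | succ n ih =>
      intro N h; simp only [numeral] at h
      cases h with
      | succ_ctx h' => exact ih _ h'

lemma value_no_step {V N : Tm} (hV : IsValue V) : ¬ Step V N := by
  induction hV generalizing N with
  | var x => intro h; cases h
  | num n => exact numeral_no_step n N
  | pair hV hW ihV ihW =>
      intro h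
      cases h with
      | pair_left h' => exact ihV h'
      | pair_right _ h' => exact ihW h'
  | abs x M => intro h; cases h

lemma steps_of_nostep {M R : Tm} (h : ∀ N, ¬ Step M N) (hs : Steps M R) : R = M := by
  rcases Relation.ReflTransGen.cases_head hs with h' | ⟨c, hc, _⟩
  · exact h'.symm
  · exact absurd hc (h c)

lemma not_value_app {M N : Tm} : ¬ IsValue (.app M N) := by
  intro h
  generalize hE : Tm.app M N = W at h
  cases h with
  | var x => cases hE
  | num n => cases n <;> simp [numeral] at hE
  | pair _ _ => cases hE
  | abs _ _ => cases hE

lemma not_value_pred {M : Tm} : ¬ IsValue (.pred M) := by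
  intro h
  generalize hE : Tm.pred M = W at h
  cases h with
  | var x => cases hE
  | num n => cases n <;> simp [numeral] at hE
  | pair _ _ => cases hE
  | abs _ _ => cases hE

lemma div_step : Step divTm divTm := by
  have h := @Step.fix_step 0 (.var 0)
  simpa [divTm, subst] using h

lemma div_step_eq {N : Tm} (h : Step divTm N) : N = divTm := by
  have h' : Step (.fix 0 (.var 0)) N := h
  cases h' with
  | fix_step => simp [divTm, subst]

lemma div_steps_eq {R : Tm} (hs : Steps divTm R) : R = divTm := by
  induction hs with
  | refl => rfl
  | tail _ h2 ih => subst ih; exact div_step_eq h2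

lemma subst_notfree (x : ℕ) (N : Tm) : ∀ M, x ∉ fv M → subst x N M = M := by
  intro M
  induction M with
  | var y => intro h; simp [fv] at h; simp [subst, Ne.symm h]
  | zero => intro _; rfl
  | succ M ih => intro h; simp [fv] at h; simp [subst, ih h]
  | pred M ih => intro h; simp [fv] at h; simp [subst, ih h]
  | ifz M P Q ihM ihP ihQ =>
      intro h; simp [fv] at h
      simp [subst, ihM h.1, ihP h.2.1, ihQ h.2.2]
  | abs y M ih =>
      intro h; simp [fv] at h
      by_cases hyx : y = x
      · simp [subst, hyx]
      · have : x ∉ fv M := fun hx => hyx ((h hx).symm)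
        simp [subst, hyx, ih this]
  | app M P ihM ihP =>
      intro h; simp [fv] at h
      simp [subst, ihM h.1, ihP h.2]
  | fix y M ih =>
      intro h; simp [fv] at h
      by_cases hyx : y = x
      · simp [subst, hyx]
      · have : x ∉ fv M := fun hx => hyx ((h hx).symm)
        simp [subst, hyx, ih this]
  | pair M P ihM ihP =>
      intro h; simp [fv] at h
      simp [subst, ihM h.1, ihP h.2]
  | lett y z M P ihM ihP =>
      intro h
      rw [fv, Finset.notMem_union] at h
      obtain ⟨h1, h2⟩ := h
      by_cases hyz : y = x ∨ z = x
      · simp [subst, hyz, ihM h1]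
      · push_neg at hyz
        have hxP : x ∉ fv P := by
          intro hx
          apply h2
          rw [Finset.mem_sdiff]
          refine ⟨hx, ?_⟩
          simp only [Finset.mem_insert, Finset.mem_singleton]
          rintro (rfl | rfl)
          exacts [hyz.1 rfl, hyz.2 rfl]
        simp [subst, hyz.1, hyz.2, ihM h1, ihP hxP]

lemma subst_closed {V : Tm} (hV : ClosedTm V) (x : ℕ) (N : Tm) :
    subst x N V = V :=
  subst_notfree x N V (by simp [ClosedTm] at hV; simp [hV])

/-- with necessity at higher type, `Nat ⇝ (Nat → Nat)` is not
downward closed: `λx.λy.((λz.pred z) x)` is in the type, `λx.λy.(div x)` is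
not (even up to divergence), yet `div ≲ λz.pred z`. -/
theorem narrow_not_downward_closed :
    Sem (.narrow .nat (.arrow .nat .nat)) term1 ∧
    ¬ TBarSem (Sem (.narrow .nat (.arrow .nat .nat))) term2 ∧
    RefBelow divTm (.abs 2 (.pred (.var 2))) := by
  refine ⟨?part1, ?part2, ?part3⟩
  case part3 =>
    intro R hR hNF
    have hRdiv := div_steps_eq hR
    subst hRdiv
    exact absurd ⟨divTm, div_step⟩ hNF
  case part2 =>
    -- term2 is a closed value in normal form, so TBarSem reduces to Sem.
    rintro (⟨_, V', hs, _, hsem⟩ | ⟨_, hdiv⟩)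
    · -- term2 is an abstraction, hence does not step
      have hV' : V' = term2 :=
        steps_of_nostep (fun N => value_no_step (IsValue.abs _ _)) hs
      subst hV'
      rcases hsem with ⟨x, P, hE, _, hprop⟩
      -- identify x and P
      have hx : x = 0 := by cases hE; rfl
      have hP : P = .abs 1 (.app divTm (.var 0)) := by cases hE; rfl
      subst hx; subst hP
      -- counterexample value: λv.v with v = 5
      have hc : ClosedTm (Tm.abs 5 (.var 5)) := by show fv _ = ∅; decide
      have hval : IsValue (Tm.abs 5 (.var 5)) := IsValue.abs _ _
      have hsub : subst 0 (Tm.abs 5 (.var 5)) (Tm.abs 1 (.app divTm (.var 0)))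
          = Tm.abs 1 (.app divTm (.abs 5 (.var 5))) := by
        simp [subst, divTm]
      have hT : TSem (Sem (.arrow .nat .nat))
          (subst 0 (Tm.abs 5 (.var 5)) (Tm.abs 1 (.app divTm (.var 0)))) := by
        rw [hsub]
        refine ⟨by show fv _ = ∅; decide, _, Relation.ReflTransGen.refl, IsValue.abs _ _, ?_⟩
        refine ⟨1, .app divTm (.abs 5 (.var 5)), rfl, by show fv _ = ∅; decide, ?_⟩
        intro U hUc hUv hUsem
        have hsubU : subst 1 U (Tm.app divTm (.abs 5 (.var 5)))
            = Tm.app divTm (.abs 5 (.var 5)) := by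
          simp [subst, divTm]
        rw [hsubU]
        -- this application diverges: it steps only to itself
        have hstep1 : ∀ N, Step (Tm.app divTm (.abs 5 (.var 5))) N →
            N = Tm.app divTm (.abs 5 (.var 5)) := by
          intro N h
          have h' : Step (Tm.app (.fix 0 (.var 0)) (.abs 5 (.var 5))) N := h
          cases h' with
          | app_left h'' => rw [div_step_eq h'']
        have hsteps1 : ∀ N, Steps (Tm.app divTm (.abs 5 (.var 5))) N →
            N = Tm.app divTm (.abs 5 (.var 5)) := by
          intro N hs
          induction hs with
          | refl => rfl
          | tail _ h2 ih => subst ih; exact hstep1 _ h2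
        refine Or.inr ⟨by show fv _ = ∅; decide, ?_⟩
        rintro ⟨N, hsN, hNF⟩
        have := hsteps1 N hsN
        subst this
        exact hNF ⟨_, Step.app_left div_step⟩
      have := hprop _ hc hval hT
      rcases this with ⟨n, hn⟩
      cases n <;> simp [numeral] at hn
    · -- term2 is itself a normal form, so it does not diverge
      exact hdiv ⟨term2, Relation.ReflTransGen.refl,
        fun ⟨N, hN⟩ => value_no_step (IsValue.abs _ _) hN⟩
  case part1 =>
    refine ⟨0, .abs 1 (.app (.abs 2 (.pred (.var 2))) (.var 0)), rfl, by show fv _ = ∅; decide, ?_⟩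
    intro V hVc hVv hT
    have hsub : subst 0 V (Tm.abs 1 (.app (.abs 2 (.pred (.var 2))) (.var 0)))
        = Tm.abs 1 (.app (.abs 2 (.pred (.var 2))) V) := by
      simp [subst]
    rw [hsub] at hT
    rcases hT with ⟨_, V', hs, _, hsem⟩
    have hV' : V' = Tm.abs 1 (.app (.abs 2 (.pred (.var 2))) V) :=
      steps_of_nostep (fun N => value_no_step (IsValue.abs _ _)) hs
    subst hV'
    rcases hsem with ⟨x, P, hE, _, hprop⟩
    have hx : x = 1 := by cases hE; rfl
    have hP : P = .app (.abs 2 (.pred (.var 2))) V := by cases hE; rfl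
    subst hx; subst hP
    have h0c : ClosedTm (numeral 0) := by show fv _ = ∅; decide
    have h0v : IsValue (numeral 0) := IsValue.num 0
    have h0sem : Sem .nat (numeral 0) := ⟨0, rfl⟩
    have hTB := hprop _ h0c h0v h0sem
    have hsubU : subst 1 (numeral 0) (Tm.app (.abs 2 (.pred (.var 2))) V)
        = Tm.app (.abs 2 (.pred (.var 2))) V := by
      simp [subst, subst_closed hVc]
    rw [hsubU] at hTB
    -- the only step from `(λz.pred z) V` is to `pred V`
    have hstepB : ∀ N, Step (Tm.app (.abs 2 (.pred (.var 2))) V) N →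
        N = Tm.pred V := by
      intro N h
      cases h with
      | beta hv => simp [subst]
      | app_right h'' => exact absurd h'' (value_no_step hVv)
      | app_left h'' => exact absurd h'' (value_no_step (IsValue.abs _ _))
    by_cases hnum : ∃ n, V = numeral n
    · obtain ⟨n, rfl⟩ := hnum
      exact ⟨n, rfl⟩
    · exfalso
      push_neg at hnum
      have hpredNF : ∀ N, ¬ Step (Tm.pred V) N := by
        intro N h
        cases h with
        | pred_zero => exact hnum 0 rfl
        | pred_succ => exact hnum _ rfl
        | pred_ctx h' => exact value_no_step hVv h'
      rcases hTB with ⟨_, W, hsW, hWval, _⟩ | ⟨_, hdiv⟩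
      · rcases Relation.ReflTransGen.cases_head hsW with h' | ⟨c, hc, hcW⟩
        · exact not_value_app (h' ▸ hWval)
        · have hc' := hstepB _ hc
          subst hc'
          have := steps_of_nostep hpredNF hcW
          subst this
          exact not_value_pred hWval
      · have hstep : Step (Tm.app (.abs 2 (.pred (.var 2))) V) (Tm.pred V) := by
          have h := Step.beta (x := 2) (M := .pred (.var 2)) hVv
          simpa [subst] using h
        exact hdiv ⟨_, Relation.ReflTransGen.single hstep,
          fun ⟨N, hN⟩ => hpredNF N hN⟩
end PCF
end

section
/- With necessity arrows at higher type, the type A = Nat ⇝ (Nat→(Nat ⇝ (Nat→Nat))) does not furnish finite counterexamples: letting add = fix f.λp.(let (y,z)=p in if y then z else succ(f (pred(y), z))) and T = λw.λx.λy.λz.((fix f.λu.(if u then add (y,z) else f (pred(u)))) x), the value T is not in ⟦A⟧, yet for every k ∈ ℕ the value T_k = λw.λx.λy.λz.((fixᵏ f.λu.(if u then add (y,z) else f (pred(u)))) x) obtained by replacing the inner fixpoint by its k-th approximant is in ⟦A⟧. -/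
namespace PCF

/-- `add = fix f. λp. let (y,z) = p in if y then z else succ (f (pred y, z))`
(with `f = 0`, `p = 1`, `y = 2`, `z = 3`). -/
def addTm : Tm :=
  .fix 0 (.abs 1 (.lett 2 3 (.var 1)
    (.ifz (.var 2) (.var 3)
      (.succ (.app (.var 0) (.pair (.pred (.var 2)) (.var 3)))))))

/-- `λu. if u then add (y,z) else f (pred u)` (with `f = 0`, `u = 6`, and the
free variables `y = 2`, `z = 3`). -/
def innerBody : Tm :=
  .abs 6 (.ifz (.var 6)
    (.app addTm (.pair (.var 2) (.var 3)))
    (.app (.var 0) (.pred (.var 6))))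

/-- `T = λw.λx.λy.λz. ((fix f. λu. if u then add (y,z) else f (pred u)) x)`
(with `w = 4`, `x = 5`, `y = 2`, `z = 3`). -/
def bigT : Tm :=
  .abs 4 (.abs 5 (.abs 2 (.abs 3 (.app (.fix 0 innerBody) (.var 5)))))

/-- `T_k`: the same value with the inner fixpoint replaced by its `k`-th
approximant. -/
def bigTk (k : ℕ) : Tm :=
  .abs 4 (.abs 5 (.abs 2 (.abs 3 (.app (fixApprox 0 innerBody k) (.var 5)))))

/-- The type `Nat ⇝ (Nat → (Nat ⇝ (Nat → Nat)))`. -/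
def tyA : Ty := .narrow .nat (.arrow .nat (.narrow .nat (.arrow .nat .nat)))

lemma ifz_inv {Q N P X : Tm} (h : Step (.ifz Q N P) X) :
    (Q = numeral 0 ∧ X = N) ∨ ((∃ n, Q = numeral (n+1)) ∧ X = P) ∨
    (∃ Q', Step Q Q' ∧ X = .ifz Q' N P) := by
  cases h with
  | ifz_zero => exact Or.inl ⟨rfl, rfl⟩
  | ifz_succ => exact Or.inr (Or.inl ⟨⟨_, rfl⟩, rfl⟩)
  | ifz_ctx h' => exact Or.inr (Or.inr ⟨_, h', rfl⟩)

lemma numeral_succ_ne_zero {n : ℕ} : numeral (n+1) ≠ numeral 0 := by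
  simp [numeral]

lemma pred_inv {Q X : Tm} (h : Step (.pred Q) X) :
    (Q = numeral 0 ∧ X = numeral 0) ∨ (∃ n, Q = numeral (n+1) ∧ X = numeral n) ∨
    (∃ Q', Step Q Q' ∧ X = .pred Q') := by
  cases h with
  | pred_zero => exact Or.inl ⟨rfl, rfl⟩
  | pred_succ => exact Or.inr (Or.inl ⟨_, rfl, rfl⟩)
  | pred_ctx h' => exact Or.inr (Or.inr ⟨_, h', rfl⟩)

lemma numeral_inj : ∀ {m n : ℕ}, numeral m = numeral n → m = n := by
  intro m
  induction m with
  | zero => intro n h; cases n <;> simp [numeral] at h ⊢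
  | succ k ih =>
    intro n h
    cases n with
    | zero => simp [numeral] at h
    | succ j => simp only [numeral, Tm.succ.injEq] at h; exact congrArg (·+1) (ih h)
lemma numeral_succ_eq {n : ℕ} : numeral (n+1) = .succ (numeral n) := rfl

lemma step_det : ∀ {M N₁ N₂ : Tm}, Step M N₁ → Step M N₂ → N₁ = N₂ := by
  intro M N₁ N₂ h1
  induction h1 generalizing N₂ with
  | ifz_zero =>
    intro h2
    cases h2 with
    | ifz_zero => rfl
    | ifz_ctx h => exact absurd h (numeral_no_step 0 _)
  | ifz_succ =>
    intro h2
    rcases ifz_inv h2 with ⟨h, rfl⟩ | ⟨_, rfl⟩ | ⟨Q', hQ, rfl⟩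
    · exact absurd h numeral_succ_ne_zero
    · rfl
    · exact absurd hQ (numeral_no_step _ _)
  | lett_beta hV hW =>
    intro h2
    cases h2 with
    | lett_beta => rfl
    | lett_ctx h => exact absurd h (value_no_step (IsValue.pair hV hW))
  | fix_step => intro h2; cases h2; rfl
  | pred_zero =>
    intro h2
    cases h2 with
    | pred_zero => rfl
    | pred_ctx h => exact absurd h (numeral_no_step 0 _)
  | pred_succ =>
    intro h2
    rcases pred_inv h2 with ⟨h, rfl⟩ | ⟨m, hm, rfl⟩ | ⟨Q', hQ, rfl⟩
    · exact absurd h numeral_succ_ne_zero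
    · rw [Nat.succ_injective (numeral_inj hm)]
    · exact absurd hQ (numeral_no_step _ _)
  | beta hV =>
    intro h2
    cases h2 with
    | beta => rfl
    | app_right h => exact absurd h (value_no_step hV)
    | app_left h => exact absurd h (value_no_step (IsValue.abs _ _))
  | succ_ctx h ih =>
    intro h2
    cases h2 with
    | succ_ctx h' => rw [ih h']
  | pred_ctx h ih =>
    intro h2
    cases h2 with
    | pred_zero => exact absurd h (numeral_no_step 0 _)
    | pred_succ => exact absurd h (numeral_no_step _ _)
    | pred_ctx h' => rw [ih h']
  | pair_left h ih =>
    intro h2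
    cases h2 with
    | pair_left h' => rw [ih h']
    | pair_right hV _ => exact absurd h (value_no_step hV)
  | pair_right hV h ih =>
    intro h2
    cases h2 with
    | pair_left h' => exact absurd h' (value_no_step hV)
    | pair_right _ h' => rw [ih h']
  | lett_ctx h ih =>
    intro h2
    cases h2 with
    | lett_beta hV hW => exact absurd h (value_no_step (IsValue.pair hV hW))
    | lett_ctx h' => rw [ih h']
  | ifz_ctx h ih =>
    intro h2
    cases h2 with
    | ifz_zero => exact absurd h (numeral_no_step 0 _)
    | ifz_succ => exact absurd h (numeral_no_step _ _)
    | ifz_ctx h' => rw [ih h']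
  | app_right h ih =>
    intro h2
    cases h2 with
    | beta hV => exact absurd h (value_no_step hV)
    | app_right h' => rw [ih h']
    | app_left h' => exact absurd h' (value_no_step (IsValue.abs _ _))
  | app_left h ih =>
    intro h2
    cases h2 with
    | beta hV => exact absurd h (value_no_step (IsValue.abs _ _))
    | app_right h' => exact absurd h (value_no_step (IsValue.abs _ _))
    | app_left h' => rw [ih h']
lemma value_nf {V : Tm} (hV : IsValue V) : NormalForm V :=
  fun ⟨_, h⟩ => value_no_step hV h

lemma steps_value_eq {V W : Tm} (hV : IsValue V) (h : Steps V W) : W = V := by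
  induction h using Relation.ReflTransGen.head_induction_on with
  | refl => rfl
  | head h' _ _ => exact absurd h' (value_no_step hV)

/-- determinism triangle: if `M` reaches normal form `A` and also `B`, then `B` reaches `A`. -/
lemma nf_triangle : ∀ {M A B : Tm}, Steps M A → NormalForm A → Steps M B → Steps B A := by
  intro M A B h1 hA h2
  induction h2 using Relation.ReflTransGen.head_induction_on with
  | refl => exact h1
  | @head M X hMX _ ih =>
    cases (Relation.ReflTransGen.cases_head h1) with
    | inl h => subst h; exact absurd ⟨_, hMX⟩ hA
    | inr h =>
      obtain ⟨Y, hMY, hYA⟩ := h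
      exact ih (step_det hMY hMX ▸ hYA)

lemma diverges_of_step {M M' : Tm} (h : Step M M') (hD : Diverges M') : Diverges M := by
  rintro ⟨R, hR, hRnf⟩
  exact hD ⟨R, nf_triangle hR hRnf (Relation.ReflTransGen.single h), hRnf⟩

lemma not_tsem_of_stuck {M S : Tm} (hMS : Steps M S) (hS : Stuck S) (Sv : Tm → Prop) :
    ¬ TSem Sv M := by
  rintro ⟨-, V, hV, hVval, -⟩
  have := nf_triangle hMS hS.1 hV
  have := steps_value_eq hVval this
  exact hS.2 (this ▸ hVval)

lemma not_tbarsem_of_stuck {M S : Tm} (hMS : Steps M S) (hS : Stuck S) (Sv : Tm → Prop) :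
    ¬ TBarSem Sv M := by
  rintro (h | ⟨-, hD⟩)
  · exact not_tsem_of_stuck hMS hS Sv h
  · exact hD ⟨S, hMS, hS.1⟩

lemma value_not_diverges {V : Tm} (hV : IsValue V) : ¬ Diverges V :=
  fun hD => hD ⟨V, Relation.ReflTransGen.refl, value_nf hV⟩

lemma tsem_value {V : Tm} (hV : IsValue V) {Sv : Tm → Prop} (h : TSem Sv V) : Sv V := by
  obtain ⟨-, W, hW, -, hSv⟩ := h
  rwa [steps_value_eq hV hW] at hSv

lemma tbarsem_value {V : Tm} (hV : IsValue V) {Sv : Tm → Prop} (h : TBarSem Sv V) : Sv V := by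
  rcases h with h | ⟨-, hD⟩
  · exact tsem_value hV h
  · exact absurd hD (value_not_diverges hV)

/-- `app divTm N` only steps to itself. -/
lemma app_div_step {N X : Tm} (h : Step (.app divTm N) X) : X = .app divTm N := by
  cases h with
  | app_left h' =>
    cases h' with
    | fix_step => simp [divTm, subst]

lemma app_div_steps {N R : Tm} (hR : Steps (.app divTm N) R) : R = .app divTm N := by
  induction hR with
  | refl => rfl
  | tail _ hstep ih => subst ih; exact app_div_step hstep

lemma app_div_diverges (N : Tm) : Diverges (.app divTm N) := by
  rintro ⟨R, hR, hRnf⟩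
  have hRe := app_div_steps hR
  subst hRe
  exact hRnf ⟨_, Step.app_left div_step⟩
lemma not_free_subst : ∀ {M : Tm} {x : ℕ} (N : Tm), x ∉ fv M → subst x N M = M := by
  intro M
  induction M with
  | var y =>
    intro x N h
    simp [fv] at h
    simp only [subst]
    rw [if_neg (fun hyx => h hyx.symm)]
  | zero => intro x N _; rfl
  | succ M ih => intro x N h; simp only [fv] at h; simp [subst, ih N h]
  | pred M ih => intro x N h; simp only [fv] at h; simp [subst, ih N h]
  | ifz M P Q ihM ihP ihQ =>
    intro x N h
    simp only [fv, Finset.mem_union, not_or] at h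
    simp [subst, ihM N h.1.1, ihP N h.1.2, ihQ N h.2]
  | abs y M ih =>
    intro x N h
    simp only [fv, Finset.mem_sdiff, Finset.mem_singleton, not_and, not_not] at h
    by_cases hyx : y = x
    · simp [subst, hyx]
    · simp only [subst, if_neg hyx]
      have : x ∉ fv M := fun hx => hyx ((h hx).symm)
      rw [ih N this]
  | app M P ihM ihP =>
    intro x N h
    simp only [fv, Finset.mem_union, not_or] at h
    simp [subst, ihM N h.1, ihP N h.2]
  | fix y M ih =>
    intro x N h
    simp only [fv, Finset.mem_sdiff, Finset.mem_singleton, not_and, not_not] at h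
    by_cases hyx : y = x
    · simp [subst, hyx]
    · simp only [subst, if_neg hyx]
      have : x ∉ fv M := fun hx => hyx ((h hx).symm)
      rw [ih N this]
  | pair M P ihM ihP =>
    intro x N h
    simp only [fv, Finset.mem_union, not_or] at h
    simp [subst, ihM N h.1, ihP N h.2]
  | lett y z M P ihM ihP =>
    intro x N h
    simp only [fv, Finset.mem_union, not_or] at h
    by_cases hcase : y = x ∨ z = x
    · simp [subst, hcase, ihM N h.1]
    · push_neg at hcase
      have hmem : x ∉ ({y, z} : Finset ℕ) := by
        simp only [Finset.mem_insert, Finset.mem_singleton]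
        rintro (rfl | rfl)
        exacts [hcase.1 rfl, hcase.2 rfl]
      have hxP : x ∉ fv P := fun hx => h.2 (Finset.mem_sdiff.mpr ⟨hx, hmem⟩)
      simp [subst, ihM N h.1, hcase.1, hcase.2, ihP N hxP]

lemma closed_subst {M : Tm} (h : ClosedTm M) (x : ℕ) (N : Tm) : subst x N M = M :=
  not_free_subst N (by simp [ClosedTm] at h; simp [h])

lemma numeral_fv : ∀ n, fv (numeral n) = ∅ := by
  intro n; induction n with
  | zero => rfl
  | succ k ih => simpa [numeral, fv] using ih

lemma numeral_closed (n : ℕ) : ClosedTm (numeral n) := numeral_fv n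

lemma numeral_ne_abs {n x : ℕ} {M : Tm} : numeral n ≠ .abs x M := by
  cases n <;> simp [numeral]

lemma not_sem_nat_abs {x : ℕ} {M : Tm} : ¬ Sem .nat (.abs x M) := by
  rintro ⟨n, h⟩; exact numeral_ne_abs h.symm

lemma is_value_shapes {W : Tm} (h : IsValue W) {V N P : Tm} : W ≠ .ifz V N P := by
  induction h with
  | var x => simp
  | num n => cases n <;> simp [numeral]
  | pair _ _ _ _ => simp
  | abs x M => simp

lemma stuck_ifz {V N P : Tm} (hV : IsValue V) (hnum : ∀ n, V ≠ numeral n) :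
    Stuck (.ifz V N P) := by
  constructor
  · rintro ⟨X, hX⟩
    rcases ifz_inv hX with ⟨h, -⟩ | ⟨⟨n, h⟩, -⟩ | ⟨Q', hQ, -⟩
    · exact hnum 0 h
    · exact hnum _ h
    · exact value_no_step hV hQ
  · exact fun h => is_value_shapes h rfl
lemma steps_app_left {M M' N : Tm} (h : Steps M M') : Steps (.app M N) (.app M' N) := by
  induction h with
  | refl => exact Relation.ReflTransGen.refl
  | tail _ h' ih => exact ih.tail (Step.app_left h')

/- rfl equations for `subst` -/
lemma subst_var (x : ℕ) (N : Tm) (y : ℕ) :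
    subst x N (.var y) = if y = x then N else .var y := rfl
lemma subst_zero (x : ℕ) (N : Tm) : subst x N .zero = .zero := rfl
lemma subst_succ (x : ℕ) (N M : Tm) : subst x N (.succ M) = .succ (subst x N M) := rfl
lemma subst_pred (x : ℕ) (N M : Tm) : subst x N (.pred M) = .pred (subst x N M) := rfl
lemma subst_ifz (x : ℕ) (N M P Q : Tm) :
    subst x N (.ifz M P Q) = .ifz (subst x N M) (subst x N P) (subst x N Q) := rfl
lemma subst_abs (x : ℕ) (N : Tm) (y : ℕ) (M : Tm) :
    subst x N (.abs y M) = if y = x then .abs y M else .abs y (subst x N M) := rfl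
lemma subst_app (x : ℕ) (N M P : Tm) :
    subst x N (.app M P) = .app (subst x N M) (subst x N P) := rfl
lemma subst_fix (x : ℕ) (N : Tm) (y : ℕ) (M : Tm) :
    subst x N (.fix y M) = if y = x then .fix y M else .fix y (subst x N M) := rfl
lemma subst_pair (x : ℕ) (N M P : Tm) :
    subst x N (.pair M P) = .pair (subst x N M) (subst x N P) := rfl
lemma subst_lett (x : ℕ) (N : Tm) (y z : ℕ) (M P : Tm) :
    subst x N (.lett y z M P)
      = .lett y z (subst x N M) (if y = x ∨ z = x then P else subst x N P) := rfl

/-- `Kt V n` = `add (V, n)`. -/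
def Kt (V n : Tm) : Tm := .app addTm (.pair V n)

/-- The full inner fixpoint, with `y := V`, `z := n` plugged in. -/
def FF (V n : Tm) : Tm :=
  .fix 0 (.abs 6 (.ifz (.var 6) (Kt V n) (.app (.var 0) (.pred (.var 6)))))

/-- One unfolding of `FF`. -/
def GG (V n : Tm) : Tm :=
  .abs 6 (.ifz (.var 6) (Kt V n) (.app (FF V n) (.pred (.var 6))))

/-- Approximants with `y := V`, `z := n` plugged in. -/
def Wsub (V n : Tm) : ℕ → Tm
  | 0 => divTm
  | k+1 => .abs 6 (.ifz (.var 6) (Kt V n) (.app (Wsub V n k) (.pred (.var 6))))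

lemma addTm_fv : fv addTm = ∅ := by decide

lemma subst_addTm (x : ℕ) (N : Tm) : subst x N addTm = addTm :=
  closed_subst addTm_fv x N

lemma subst_Kt {x : ℕ} {N V n : Tm} (hV : ClosedTm V) (hn : ClosedTm n) :
    subst x N (Kt V n) = Kt V n := by
  simp only [Kt, subst_app, subst_pair, subst_addTm, closed_subst hV, closed_subst hn]

lemma FF_step {V n : Tm} (hV : ClosedTm V) (hn : ClosedTm n) : Step (FF V n) (GG V n) := by
  have e : subst 0 (FF V n)
      (.abs 6 (.ifz (.var 6) (Kt V n) (.app (.var 0) (.pred (.var 6))))) = GG V n := by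
    simp [subst, Kt, addTm, GG, FF, closed_subst hV, closed_subst hn]
  exact e ▸ (Step.fix_step (x := 0)
    (M := .abs 6 (.ifz (.var 6) (Kt V n) (.app (.var 0) (.pred (.var 6))))))

lemma GG_beta {V n : Tm} (hV : ClosedTm V) (hn : ClosedTm n) (m : ℕ) :
    Step (.app (GG V n) (numeral m))
      (.ifz (numeral m) (Kt V n) (.app (FF V n) (.pred (numeral m)))) := by
  have e : subst 6 (numeral m) (Tm.ifz (.var 6) (Kt V n) (.app (FF V n) (.pred (.var 6))))
      = .ifz (numeral m) (Kt V n) (.app (FF V n) (.pred (numeral m))) := by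
    simp [subst, Kt, addTm, FF, closed_subst hV, closed_subst hn, closed_subst (numeral_closed m)]
  exact e ▸ (Step.beta (x := 6)
    (M := .ifz (.var 6) (Kt V n) (.app (FF V n) (.pred (.var 6)))) (IsValue.num m))

/-- main run: `(fix f. …) m̄` reaches `add (V, n)`. -/
lemma run_GG {V n : Tm} (hV : ClosedTm V) (hn : ClosedTm n) :
    ∀ m : ℕ, Steps (.app (GG V n) (numeral m)) (Kt V n) := by
  intro m
  induction m with
  | zero => exact (Relation.ReflTransGen.single (GG_beta hV hn 0)).tail Step.ifz_zero
  | succ s ih =>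
    refine (Relation.ReflTransGen.single (GG_beta hV hn (s+1))).trans ?_
    refine (Relation.ReflTransGen.single Step.ifz_succ).trans ?_
    refine (Relation.ReflTransGen.single (Step.app_left (FF_step hV hn))).trans ?_
    exact (Relation.ReflTransGen.single (Step.app_right Step.pred_succ)).trans ih

lemma run_FF {V n : Tm} (hV : ClosedTm V) (hn : ClosedTm n) (m : ℕ) :
    Steps (.app (FF V n) (numeral m)) (Kt V n) :=
  (Relation.ReflTransGen.single (Step.app_left (FF_step hV hn))).trans (run_GG hV hn m)

/-- `add (V, n)` reaches `ifz V n (succ (add (pred V, n)))`. -/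
lemma run_add {V n : Tm} (hV : IsValue V) (hVc : ClosedTm V) (hvn : IsValue n)
    (hn : ClosedTm n) :
    Steps (Kt V n) (.ifz V n (.succ (Kt (.pred V) n))) := by
  set B : Tm := .ifz (.var 2) (.var 3) (.succ (.app addTm (.pair (.pred (.var 2)) (.var 3))))
    with hB
  have s1 : Step addTm (.abs 1 (.lett 2 3 (.var 1) B)) := by
    have e : subst 0 addTm (Tm.abs 1 (.lett 2 3 (.var 1)
        (.ifz (.var 2) (.var 3) (.succ (.app (.var 0) (.pair (.pred (.var 2)) (.var 3)))))))
        = .abs 1 (.lett 2 3 (.var 1) B) := by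
      simp [hB, subst, addTm]
    exact e ▸ (Step.fix_step (x := 0) (M := .abs 1 (.lett 2 3 (.var 1)
      (.ifz (.var 2) (.var 3) (.succ (.app (.var 0) (.pair (.pred (.var 2)) (.var 3))))))))
  have s2 : Step (.app (.abs 1 (.lett 2 3 (.var 1) B)) (.pair V n))
      (.lett 2 3 (.pair V n) B) := by
    have e : subst 1 (Tm.pair V n) (Tm.lett 2 3 (.var 1) B) = .lett 2 3 (.pair V n) B := by
      simp [hB, subst, addTm]
    exact e ▸ (Step.beta (x := 1) (M := .lett 2 3 (.var 1) B) (IsValue.pair hV hvn))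
  have s3 : Step (.lett 2 3 (.pair V n) B) (.ifz V n (.succ (Kt (.pred V) n))) := by
    have e : subst 3 n (subst 2 V B) = .ifz V n (.succ (Kt (.pred V) n)) := by
      simp [hB, subst, addTm, Kt, closed_subst hVc]
    exact e ▸ (Step.lett_beta (x := 2) (y := 3) (M := B) hV hvn)
  exact ((Relation.ReflTransGen.single (Step.app_left s1)).tail s2).tail s3
lemma divTm_fv : fv divTm = ∅ := by decide

lemma Kt_fv {V n : Tm} (hV : ClosedTm V) (hn : ClosedTm n) : fv (Kt V n) = ∅ := by
  have e : fv (Kt V n) = fv addTm ∪ (fv V ∪ fv n) := rfl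
  rw [e, addTm_fv, hV, hn]
  simp

lemma Wsub_fv {V n : Tm} (hV : ClosedTm V) (hn : ClosedTm n) :
    ∀ k, fv (Wsub V n k) = ∅ := by
  intro k
  induction k with
  | zero => exact divTm_fv
  | succ j ih =>
    have e : fv (Wsub V n (j+1))
        = (({6} ∪ fv (Kt V n)) ∪ (fv (Wsub V n j) ∪ {6})) \ ({6} : Finset ℕ) := rfl
    rw [e, Kt_fv hV hn, ih]
    simp

lemma Wsub_beta {V n : Tm} (hV : ClosedTm V) (hn : ClosedTm n) (k m : ℕ) :
    Step (.app (Wsub V n (k+1)) (numeral m))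
      (.ifz (numeral m) (Kt V n) (.app (Wsub V n k) (.pred (numeral m)))) := by
  have e : subst 6 (numeral m) (Tm.ifz (.var 6) (Kt V n) (.app (Wsub V n k) (.pred (.var 6))))
      = .ifz (numeral m) (Kt V n) (.app (Wsub V n k) (.pred (numeral m))) := by
    simp only [subst_ifz, subst_app, subst_pred, subst_var, subst_Kt hV hn,
      closed_subst (Wsub_fv hV hn k)]
    norm_num
  exact e ▸ (Step.beta (x := 6)
    (M := .ifz (.var 6) (Kt V n) (.app (Wsub V n k) (.pred (.var 6)))) (IsValue.num m))

lemma run_wsub_diverges {V n : Tm} (hV : ClosedTm V) (hn : ClosedTm n) :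
    ∀ k, Diverges (.app (Wsub V n k) (numeral k)) := by
  intro k
  induction k with
  | zero => exact app_div_diverges _
  | succ j ih =>
    refine diverges_of_step (Wsub_beta hV hn j (j+1)) ?_
    refine diverges_of_step Step.ifz_succ ?_
    cases j with
    | zero => exact app_div_diverges _
    | succ i =>
      exact diverges_of_step (Step.app_right (x := 6) Step.pred_succ) ih
/-- mid-substituted approximants: `y := V` plugged, `z` still free. -/
def Wmid (V : Tm) : ℕ → Tm
  | 0 => divTm
  | k+1 => .abs 6 (.ifz (.var 6) (.app addTm (.pair V (.var 3)))
      (.app (Wmid V k) (.pred (.var 6))))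

lemma fixApprox_succ (k : ℕ) :
    fixApprox 0 innerBody (k+1)
      = .abs 6 (.ifz (.var 6) (.app addTm (.pair (.var 2) (.var 3)))
          (.app (fixApprox 0 innerBody k) (.pred (.var 6)))) := by
  show subst 0 (fixApprox 0 innerBody k) innerBody = _
  simp only [innerBody, subst_abs, subst_ifz, subst_app, subst_pair, subst_pred,
    subst_var, subst_addTm]
  norm_num

lemma fixApprox_fv : ∀ k, fv (fixApprox 0 innerBody k) ⊆ {2, 3} := by
  intro k
  induction k with
  | zero =>
    rw [show fv (fixApprox 0 innerBody 0) = ∅ from divTm_fv]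
    simp
  | succ j ih =>
    rw [fixApprox_succ]
    have e : fv (Tm.abs 6 (.ifz (.var 6) (.app addTm (.pair (.var 2) (.var 3)))
          (.app (fixApprox 0 innerBody j) (.pred (.var 6)))))
        = (({6} ∪ (fv addTm ∪ ({2} ∪ {3}))) ∪ (fv (fixApprox 0 innerBody j) ∪ {6}))
            \ ({6} : Finset ℕ) := rfl
    rw [e, addTm_fv]
    intro a ha
    simp only [Finset.mem_sdiff, Finset.mem_union, Finset.mem_singleton,
      Finset.empty_union] at ha
    obtain ⟨h1, h2⟩ := ha
    rcases h1 with (h | h | h) | (h | h)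
    · exact absurd h h2
    · simp [h]
    · simp [h]
    · exact ih h
    · exact absurd h h2

lemma subst2_fixApprox (V : Tm) : ∀ k, subst 2 V (fixApprox 0 innerBody k) = Wmid V k := by
  intro k
  induction k with
  | zero => show subst 2 V divTm = divTm; simp [divTm, subst]
  | succ j ih =>
    rw [fixApprox_succ]
    simp only [subst_abs, subst_ifz, subst_app, subst_pair, subst_pred, subst_var,
      subst_addTm, ih]
    norm_num
    rfl

lemma subst3_Wmid {V : Tm} (hV : ClosedTm V) (n : Tm) :
    ∀ k, subst 3 n (Wmid V k) = Wsub V n k := by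
  intro k
  induction k with
  | zero => show subst 3 n divTm = divTm; simp [divTm, subst]
  | succ j ih =>
    show subst 3 n (Tm.abs 6 (.ifz (.var 6) (.app addTm (.pair V (.var 3)))
      (.app (Wmid V j) (.pred (.var 6))))) = _
    simp only [subst_abs, subst_ifz, subst_app, subst_pair, subst_pred, subst_var,
      subst_addTm, closed_subst hV, ih]
    norm_num
    rfl

lemma Wmid_fv {V : Tm} (hV : ClosedTm V) : ∀ k, fv (Wmid V k) ⊆ {3} := by
  intro k
  induction k with
  | zero => rw [show fv (Wmid V 0) = ∅ from divTm_fv]; simp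
  | succ j ih =>
    have e : fv (Wmid V (j+1))
        = (({6} ∪ (fv addTm ∪ (fv V ∪ {3}))) ∪ (fv (Wmid V j) ∪ {6}))
            \ ({6} : Finset ℕ) := rfl
    rw [e, addTm_fv, hV]
    intro a ha
    simp only [Finset.mem_sdiff, Finset.mem_union, Finset.mem_singleton,
      Finset.empty_union, Finset.notMem_empty, false_or] at ha
    obtain ⟨h1, h2⟩ := ha
    rcases h1 with (h | h) | (h | h)
    · exact absurd h h2
    · simp [h]
    · exact ih h
    · exact absurd h h2

/-- the identity value, our non-numeral test value. -/
def idV : Tm := .abs 9 (.var 9)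

lemma idV_closed : ClosedTm idV := by show fv idV = ∅; decide
lemma idV_value : IsValue idV := IsValue.abs 9 (.var 9)
lemma idV_not_numeral : ∀ m, idV ≠ numeral m := fun m h => numeral_ne_abs h.symm
lemma idV_not_sem_nat : ¬ Sem .nat idV := not_sem_nat_abs
lemma sem_nat_eq (M : Tm) : Sem .nat M = ∃ n, M = numeral n := rfl
lemma sem_arrow_eq (A B : Ty) (M : Tm) :
    Sem (.arrow A B) M = (∃ x P, M = .abs x P ∧ ClosedTm M ∧
      ∀ V, ClosedTm V → IsValue V → Sem A V → TBarSem (Sem B) (subst x V P)) := rfl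
lemma sem_narrow_eq (A B : Ty) (M : Tm) :
    Sem (.narrow A B) M = (∃ x P, M = .abs x P ∧ ClosedTm M ∧
      ∀ V, ClosedTm V → IsValue V → TSem (Sem B) (subst x V P) → Sem A V) := rfl

/-- abbreviations for the subterms of `bigT` -/
def bodyT : Tm := .abs 5 (.abs 2 (.abs 3 (.app (.fix 0 innerBody) (.var 5))))

lemma bodyT_closed : ClosedTm bodyT := by show fv bodyT = ∅; decide

lemma part1 : ¬ Sem tyA bigT := by
  intro hSem
  rw [tyA, sem_narrow_eq] at hSem
  obtain ⟨x, P, hEq, -, h⟩ := hSem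
  rw [bigT] at hEq
  injection hEq with hx hP
  subst hx; subst hP
  apply idV_not_sem_nat
  apply h idV idV_closed idV_value
  have hs : subst 4 idV bodyT = bodyT := closed_subst bodyT_closed 4 idV
  rw [show (Tm.abs 5 (.abs 2 (.abs 3 (.app (.fix 0 innerBody) (.var 5))))) = bodyT from rfl,
    hs]
  refine ⟨bodyT_closed, bodyT, Relation.ReflTransGen.refl, IsValue.abs _ _, ?_⟩
  rw [sem_arrow_eq]
  refine ⟨5, _, rfl, bodyT_closed, ?_⟩
  rintro V hVc hVv ⟨m, rfl⟩
  -- subst 5 m̄ into the body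
  have hs5 : subst 5 (numeral m) (Tm.abs 2 (.abs 3 (.app (.fix 0 innerBody) (.var 5))))
      = .abs 2 (.abs 3 (.app (.fix 0 innerBody) (numeral m))) := by
    simp [subst, innerBody, addTm]
  rw [hs5]
  have hQmc : ClosedTm (Tm.abs 2 (.abs 3 (.app (.fix 0 innerBody) (numeral m)))) := by
    show fv _ = ∅
    have e : fv (Tm.abs 2 (.abs 3 (.app (.fix 0 innerBody) (numeral m))))
        = (((fv innerBody \ {0}) ∪ fv (numeral m)) \ {3}) \ ({2} : Finset ℕ) := rfl
    rw [e, numeral_fv, show fv innerBody = ({0, 2, 3} : Finset ℕ) from by decide]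
    decide
  refine Or.inl ⟨hQmc, _, Relation.ReflTransGen.refl, IsValue.abs _ _, ?_⟩
  rw [sem_narrow_eq]
  refine ⟨2, _, rfl, hQmc, ?_⟩
  intro V hVc hVv hTS
  by_contra hnot
  rw [sem_nat_eq] at hnot
  push_neg at hnot
  -- compute the substitution
  have hs2 : subst 2 V (Tm.abs 3 (.app (.fix 0 innerBody) (numeral m)))
      = .abs 3 (.app (.fix 0 (.abs 6 (.ifz (.var 6) (.app addTm (.pair V (.var 3)))
          (.app (.var 0) (.pred (.var 6)))))) (numeral m)) := by
    simp [subst, innerBody, addTm, closed_subst (numeral_closed m)]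
  rw [hs2] at hTS
  have hSem2 := tsem_value (IsValue.abs _ _) hTS
  rw [sem_arrow_eq] at hSem2
  obtain ⟨y, S, hES, -, h3⟩ := hSem2
  injection hES with hy hS
  subst hy; subst hS
  have h30 := h3 (numeral 0) (numeral_closed 0) (IsValue.num 0) ⟨0, rfl⟩
  have hs3 : subst 3 (numeral 0) (Tm.app (.fix 0 (.abs 6 (.ifz (.var 6)
        (.app addTm (.pair V (.var 3))) (.app (.var 0) (.pred (.var 6)))))) (numeral m))
      = .app (FF V (numeral 0)) (numeral m) := by
    simp [subst, addTm, FF, Kt, closed_subst hVc, closed_subst (numeral_closed m),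
      closed_subst (numeral_closed 0)]
  rw [hs3] at h30
  have hrun : Steps (.app (FF V (numeral 0)) (numeral m))
      (.ifz V (numeral 0) (.succ (Kt (.pred V) (numeral 0)))) :=
    (run_FF hVc (numeral_closed 0) m).trans
      (run_add hVv hVc (IsValue.num 0) (numeral_closed 0))
  exact not_tbarsem_of_stuck hrun (stuck_ifz hVv hnot) _ h30

lemma mem_fixApprox_fv {k a : ℕ} (h : a ∈ fv (fixApprox 0 innerBody k)) : a = 2 ∨ a = 3 := by
  have := fixApprox_fv k h
  simpa using this

lemma bodyTk_fv (k : ℕ) :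
    fv (Tm.abs 5 (.abs 2 (.abs 3 (.app (fixApprox 0 innerBody k) (.var 5))))) = ∅ := by
  have e : fv (Tm.abs 5 (.abs 2 (.abs 3 (.app (fixApprox 0 innerBody k) (.var 5)))))
      = (((fv (fixApprox 0 innerBody k) ∪ {5}) \ {3}) \ {2}) \ ({5} : Finset ℕ) := rfl
  rw [e, Finset.eq_empty_iff_forall_notMem]
  intro a ha
  simp only [Finset.mem_sdiff, Finset.mem_union, Finset.mem_singleton] at ha
  obtain ⟨⟨⟨h15, h3⟩, h2⟩, h5⟩ := ha
  rcases h15 with h' | h'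
  · rcases mem_fixApprox_fv h' with rfl | rfl
    · exact h2 rfl
    · exact h3 rfl
  · exact h5 h'

lemma bigTk_closed (k : ℕ) : ClosedTm (bigTk k) := by
  show fv _ = ∅
  have e : fv (bigTk k)
      = fv (Tm.abs 5 (.abs 2 (.abs 3 (.app (fixApprox 0 innerBody k) (.var 5)))))
          \ ({4} : Finset ℕ) := rfl
  rw [e, bodyTk_fv]
  simp

lemma Qk_closed (k : ℕ) :
    ClosedTm (Tm.abs 2 (.abs 3 (.app (fixApprox 0 innerBody k) (numeral k)))) := by
  show fv _ = ∅
  have e : fv (Tm.abs 2 (.abs 3 (.app (fixApprox 0 innerBody k) (numeral k))))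
      = ((fv (fixApprox 0 innerBody k) ∪ fv (numeral k)) \ {3}) \ ({2} : Finset ℕ) := rfl
  rw [e, numeral_fv, Finset.eq_empty_iff_forall_notMem]
  intro a ha
  simp only [Finset.mem_sdiff, Finset.mem_union, Finset.mem_singleton, Finset.union_empty] at ha
  obtain ⟨⟨h1, h3⟩, h2⟩ := ha
  rcases mem_fixApprox_fv h1 with rfl | rfl
  · exact h2 rfl
  · exact h3 rfl

lemma Rk_closed (k nn : ℕ) : ClosedTm (Tm.abs 3 (.app (Wmid idV k) (numeral nn))) := by
  show fv _ = ∅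
  have e : fv (Tm.abs 3 (.app (Wmid idV k) (numeral nn)))
      = (fv (Wmid idV k) ∪ fv (numeral nn)) \ ({3} : Finset ℕ) := rfl
  rw [e, numeral_fv, Finset.eq_empty_iff_forall_notMem]
  intro a ha
  simp only [Finset.mem_sdiff, Finset.mem_union, Finset.mem_singleton, Finset.union_empty] at ha
  obtain ⟨h1, h3⟩ := ha
  have := Wmid_fv idV_closed k h1
  simp only [Finset.mem_singleton] at this
  exact h3 this

lemma part2 (k : ℕ) : Sem tyA (bigTk k) := by
  rw [tyA, sem_narrow_eq]
  refine ⟨4, _, rfl, bigTk_closed k, ?_⟩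
  intro V hVc hVv hTS
  exfalso
  have hs4 : subst 4 V (Tm.abs 5 (.abs 2 (.abs 3 (.app (fixApprox 0 innerBody k) (.var 5)))))
      = .abs 5 (.abs 2 (.abs 3 (.app (fixApprox 0 innerBody k) (.var 5)))) :=
    closed_subst (bodyTk_fv k) 4 V
  rw [hs4] at hTS
  have hB := tsem_value (IsValue.abs _ _) hTS
  rw [sem_arrow_eq] at hB
  obtain ⟨y, Q, hEQ, -, hB⟩ := hB
  injection hEQ with hy hQ
  subst hy; subst hQ
  have hBk := hB (numeral k) (numeral_closed k) (IsValue.num k) ⟨k, rfl⟩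
  have h5nf : subst 5 (numeral k) (fixApprox 0 innerBody k) = fixApprox 0 innerBody k := by
    refine not_free_subst _ (fun h => ?_)
    rcases mem_fixApprox_fv h with h' | h' <;> simp at h'
  have hs5 : subst 5 (numeral k) (Tm.abs 2 (.abs 3 (.app (fixApprox 0 innerBody k) (.var 5))))
      = .abs 2 (.abs 3 (.app (fixApprox 0 innerBody k) (numeral k))) := by
    simp only [subst_abs, subst_app, subst_var, h5nf]
    norm_num
  rw [hs5] at hBk
  have hC := tbarsem_value (IsValue.abs _ _) hBk
  rw [sem_narrow_eq] at hC
  obtain ⟨y2, R, hER, -, hC⟩ := hC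
  injection hER with hy2 hR
  subst hy2; subst hR
  apply idV_not_sem_nat
  apply hC idV idV_closed idV_value
  have hs2 : subst 2 idV (Tm.abs 3 (.app (fixApprox 0 innerBody k) (numeral k)))
      = .abs 3 (.app (Wmid idV k) (numeral k)) := by
    simp only [subst_abs, subst_app, subst2_fixApprox, closed_subst (numeral_closed k)]
    norm_num
  rw [hs2]
  refine ⟨Rk_closed k k, _, Relation.ReflTransGen.refl, IsValue.abs _ _, ?_⟩
  rw [sem_arrow_eq]
  refine ⟨3, _, rfl, Rk_closed k k, ?_⟩
  rintro V' hV'c hV'v ⟨nn, rfl⟩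
  have hs3 : subst 3 (numeral nn) (Tm.app (Wmid idV k) (numeral k))
      = .app (Wsub idV (numeral nn) k) (numeral k) := by
    simp only [subst_app, subst3_Wmid idV_closed, closed_subst (numeral_closed k)]
  rw [hs3]
  refine Or.inr ⟨?_, run_wsub_diverges idV_closed (numeral_closed nn) k⟩
  show fv _ = ∅
  have e : fv (Tm.app (Wsub idV (numeral nn) k) (numeral k))
      = fv (Wsub idV (numeral nn) k) ∪ fv (numeral k) := rfl
  rw [e, numeral_fv, Wsub_fv idV_closed (numeral_closed nn)]
  simp

/-- with necessity at higher type, the type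
`Nat ⇝ (Nat → (Nat ⇝ (Nat → Nat)))` does not furnish finite counterexamples:
`T` is not in the type, but each finite approximation `T_k` is. -/
theorem no_finite_counterexamples :
    ¬ Sem tyA bigT ∧ ∀ k : ℕ, Sem tyA (bigTk k) := by
  exact ⟨part1, part2⟩

end PCF
end
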